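/- arXiv:2103.11176 — 3 statements merged into one kernel-verified Lean document; each statement's English description precedes it below -/
import Mathlib

section
/- Let A be a real m×m matrix, N a real n×m matrix, P a real k×n matrix, W a symmetric invertible real n×n matrix such that S₀ := P W⁻¹ Pᵀ is invertible, and β ≠ 0 a real number. Define G = Nᵀ W⁻¹ Pᵀ S₀⁻¹ and H = A + (1/β) Nᵀ W⁻¹ N − (1/β) Nᵀ W⁻¹ Pᵀ S₀⁻¹ P W⁻¹ N. Then the 3×3 block matrix F̂ = [[A, Nᵀ, 0], [−N, βW, Pᵀ], [0, P, 0]] admits the block factorization F̂ = L · C · R, where L = [[I, (1/β) Nᵀ W⁻¹, G], [0, I, 0], [0, (1/β) P W⁻¹, I]], C = blockdiag(H, βW, −(1/β) S₀), and R = [[I, 0, 0], [−(1/β) W⁻¹ N, I, (1/β) W⁻¹ Pᵀ], [−Gᵀ, 0, I]]. -/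
open Matrix in
/-- Schur-complement block factorization `F̂ = L · C · R` of the relaxed 3×3 block
Newtonian matrix `F̂ = [[A, Nᵀ, 0], [-N, βW, Pᵀ], [0, P, 0]]`, where
`H = A + (1/β) Nᵀ W⁻¹ N - (1/β) Nᵀ W⁻¹ Pᵀ S₀⁻¹ P W⁻¹ N` is the Schur complement of the
right-bottom 2×2 block and `G = Nᵀ W⁻¹ Pᵀ S₀⁻¹`, `S₀ = P W⁻¹ Pᵀ`. -/
theorem stmt_4 (m n k : ℕ)
    (A : Matrix (Fin m) (Fin m) ℝ)
    (N : Matrix (Fin n) (Fin m) ℝ)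
    (P : Matrix (Fin k) (Fin n) ℝ)
    (W : Matrix (Fin n) (Fin n) ℝ) (hWsymm : W.IsSymm) (hW : IsUnit W.det)
    (hS₀ : IsUnit (P * W⁻¹ * Pᵀ).det)
    (β : ℝ) (hβ : β ≠ 0) :
    (fromBlocks A (fromCols Nᵀ 0) (fromRows (-N) 0)
        (fromBlocks (β • W) Pᵀ P 0)) =
    (fromBlocks 1
        (fromCols ((1/β) • (Nᵀ * W⁻¹)) (Nᵀ * W⁻¹ * Pᵀ * (P * W⁻¹ * Pᵀ)⁻¹))
        0
        (fromBlocks 1 0 ((1/β) • (P * W⁻¹)) 1)) *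
    (fromBlocks (A + (1/β) • (Nᵀ * W⁻¹ * N)
          - (1/β) • (Nᵀ * W⁻¹ * Pᵀ * (P * W⁻¹ * Pᵀ)⁻¹ * (P * W⁻¹ * N)))
        0 0
        (fromBlocks (β • W) 0 0 (-((1/β) • (P * W⁻¹ * Pᵀ))))) *
    (fromBlocks 1 0
        (fromRows (-((1/β) • (W⁻¹ * N))) (-((Nᵀ * W⁻¹ * Pᵀ * (P * W⁻¹ * Pᵀ)⁻¹)ᵀ)))
        (fromBlocks 1 ((1/β) • (W⁻¹ * Pᵀ)) 0 1)) := by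
  have hWiW : W⁻¹ * W = 1 := nonsing_inv_mul W hW
  have hWWi : W * W⁻¹ = 1 := mul_nonsing_inv W hW
  have hSiS : (P * W⁻¹ * Pᵀ)⁻¹ * (P * W⁻¹ * Pᵀ) = 1 := nonsing_inv_mul _ hS₀
  have hSSi : (P * W⁻¹ * Pᵀ) * (P * W⁻¹ * Pᵀ)⁻¹ = 1 := mul_nonsing_inv _ hS₀
  have hWt : Wᵀ = W := hWsymm
  have hWit : (W⁻¹)ᵀ = W⁻¹ := by rw [Matrix.transpose_nonsing_inv, hWt]
  simp only [fromBlocks_multiply, Matrix.fromCols_mul_fromBlocks,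
    Matrix.fromBlocks_mul_fromRows, Matrix.fromCols_mul_fromRows,
    Matrix.mul_fromCols, Matrix.fromRows_mul,
    Matrix.mul_zero, Matrix.zero_mul, Matrix.one_mul, Matrix.mul_one,
    add_zero, zero_add, Matrix.smul_mul, Matrix.mul_smul, transpose_mul,
    Matrix.transpose_transpose, hWit, hWt, smul_smul, one_div,
    inv_mul_cancel₀ hβ, one_smul, Matrix.neg_mul, Matrix.mul_neg, neg_mul, mul_neg, neg_neg]
  have hSit : ((P * (W⁻¹ * Pᵀ))⁻¹)ᵀ = (P * (W⁻¹ * Pᵀ))⁻¹ := by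
    simp [Matrix.transpose_nonsing_inv, hWit, Matrix.mul_assoc]
  have hSiS' : (P * (W⁻¹ * Pᵀ))⁻¹ * (P * (W⁻¹ * Pᵀ)) = 1 := by
    rw [← Matrix.mul_assoc P W⁻¹ Pᵀ]; exact hSiS
  have hSSi' : ∀ (X : Matrix (Fin k) (Fin m) ℝ),
      (P * (W⁻¹ * Pᵀ)) * ((P * (W⁻¹ * Pᵀ))⁻¹ * X) = X := by
    intro X
    rw [← Matrix.mul_assoc, ← Matrix.mul_assoc P W⁻¹ Pᵀ, hSSi, Matrix.one_mul]
  have c1 : ∀ (X : Matrix (Fin n) (Fin m) ℝ), W * (W⁻¹ * X) = X := by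
    intro X; rw [← Matrix.mul_assoc, hWWi, Matrix.one_mul]
  simp only [Matrix.mul_assoc, hSit, hWiW, hSiS', hSSi', c1, Matrix.mul_neg, Matrix.neg_mul, Matrix.mul_neg, neg_mul, mul_neg, neg_mul, neg_neg,
    Matrix.mul_smul, Matrix.smul_mul, smul_smul, smul_neg, mul_inv_cancel₀ hβ, mul_one, one_mul,
    one_smul, Matrix.mul_one, Matrix.fromBlocks_inj, Matrix.fromCols_inj.eq_iff,
    Matrix.fromRows_inj.eq_iff]
  have c1k : ∀ (X : Matrix (Fin n) (Fin k) ℝ), W * (W⁻¹ * X) = X := by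
    intro X; rw [← Matrix.mul_assoc, hWWi, Matrix.one_mul]
  simp only [Matrix.smul_mul, Matrix.mul_smul, Matrix.one_mul, Matrix.mul_one, Matrix.mul_neg, Matrix.neg_mul, Matrix.mul_neg, neg_mul, mul_neg, neg_mul,
    neg_neg, smul_neg, smul_smul, mul_inv_cancel₀ hβ, inv_mul_cancel₀ hβ, one_smul, c1, c1k,
    hSSi', hSiS']
  refine ⟨by abel, ⟨trivial, by abel⟩, ⟨by simp, by abel⟩, trivial, by simp, trivial, by abel⟩
end

section
/- Let W be a real n×n diagonal matrix with nonzero diagonal entries, 𝒜 ⊆ {1, …, n} with selection matrix P (rows of the identity indexed by 𝒜) and complementary diagonal 0/1 indicator matrix Π_ℐ ((Π_ℐ)_{jj} = 1 iff j ∉ 𝒜). Then for every real m×m matrix A, every real n×m matrix N, and every real β ≠ 0, one has A + (1/β) Nᵀ W⁻¹ N − (1/β) Nᵀ W⁻¹ Pᵀ (P W⁻¹ Pᵀ)⁻¹ P W⁻¹ N = A + (1/β) Nᵀ Π_ℐ W⁻¹ Π_ℐ N. -/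
open Matrix in
/-- Simplification of the Schur complement: for a diagonal `W` with nonzero diagonal
entries, selection matrix `P` of an index set `𝒜` and diagonal 0/1 indicator `Π_ℐ` of the
complementary indices, one has
`A + (1/β) Nᵀ W⁻¹ N - (1/β) Nᵀ W⁻¹ Pᵀ (P W⁻¹ Pᵀ)⁻¹ P W⁻¹ N = A + (1/β) Nᵀ Π_ℐ W⁻¹ Π_ℐ N`. -/
theorem stmt_6 (n : ℕ) (w : Fin n → ℝ) (hw : ∀ i, w i ≠ 0)
    (𝒜 : Set (Fin n)) [DecidablePred (· ∈ 𝒜)]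
    (P : Matrix 𝒜 (Fin n) ℝ) (hP : ∀ (a : 𝒜) (j : Fin n), P a j = if (a : Fin n) = j then 1 else 0)
    (PiI : Matrix (Fin n) (Fin n) ℝ)
    (hPiI : PiI = Matrix.diagonal (fun j => if j ∈ 𝒜 then 0 else 1))
    (m : ℕ) (A : Matrix (Fin m) (Fin m) ℝ) (N : Matrix (Fin n) (Fin m) ℝ)
    (β : ℝ) (hβ : β ≠ 0) :
    A + (1/β) • (Nᵀ * (Matrix.diagonal w)⁻¹ * N)
      - (1/β) • (Nᵀ * (Matrix.diagonal w)⁻¹ * Pᵀ * (P * (Matrix.diagonal w)⁻¹ * Pᵀ)⁻¹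
          * (P * (Matrix.diagonal w)⁻¹ * N))
    = A + (1/β) • (Nᵀ * PiI * (Matrix.diagonal w)⁻¹ * PiI * N) := by
  classical
  have hWinv : (Matrix.diagonal w)⁻¹ = Matrix.diagonal (fun i => (w i)⁻¹) := by
    apply Matrix.inv_eq_right_inv
    rw [Matrix.diagonal_mul_diagonal]
    have : (fun i => w i * (w i)⁻¹) = fun _ : Fin n => (1 : ℝ) :=
      funext fun i => mul_inv_cancel₀ (hw i)
    rw [this]
    exact Matrix.diagonal_one
  have h1 : P * (Matrix.diagonal w)⁻¹ * Pᵀ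
      = Matrix.diagonal (fun a : 𝒜 => (w (a : Fin n))⁻¹) := by
    rw [hWinv]
    ext a b
    simp only [Matrix.mul_apply, Matrix.mul_diagonal, Matrix.transpose_apply, hP]
    by_cases hab : a = b
    · subst hab
      rw [Finset.sum_eq_single (a : Fin n)]
      · simp [Matrix.diagonal_apply_eq]
      · intro j _ hj
        simp [Ne.symm hj]
      · simp
    · have : ((a : Fin n)) ≠ (b : Fin n) := fun h => hab (Subtype.ext h)
      rw [Matrix.diagonal_apply_ne _ hab]
      apply Finset.sum_eq_zero
      intro j _
      by_cases hja : (a : Fin n) = j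
      · subst hja
        simp [Ne.symm this]
      · simp [hja]
  have h2 : (P * (Matrix.diagonal w)⁻¹ * Pᵀ)⁻¹
      = Matrix.diagonal (fun a : 𝒜 => w (a : Fin n)) := by
    rw [h1]
    apply Matrix.inv_eq_right_inv
    rw [Matrix.diagonal_mul_diagonal]
    have : (fun a : 𝒜 => (w (a : Fin n))⁻¹ * w (a : Fin n)) = fun _ : 𝒜 => (1 : ℝ) :=
      funext fun a => inv_mul_cancel₀ (hw a)
    rw [this]
    exact Matrix.diagonal_one
  have h3 : Pᵀ * Matrix.diagonal (fun a : 𝒜 => w (a : Fin n)) * P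
      = Matrix.diagonal (fun j => if j ∈ 𝒜 then w j else 0) := by
    rw [Matrix.mul_assoc]
    ext i j
    simp only [Matrix.mul_apply, Matrix.diagonal_mul, Matrix.transpose_apply, hP]
    by_cases hij : i = j
    · subst hij
      by_cases hi : i ∈ 𝒜
      · rw [Finset.sum_eq_single (⟨i, hi⟩ : 𝒜)]
        · rw [Finset.sum_eq_single (⟨i, hi⟩ : 𝒜)]
          · simp [hi]
          · intro b _ hb
            have : (b : Fin n) ≠ i := fun h => hb (Subtype.ext h)
            simp [this]
          · simp
        · intro a _ ha
          have : (a : Fin n) ≠ i := fun h => ha (Subtype.ext h)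
          simp [this]
        · simp
      · rw [Matrix.diagonal_apply_eq]
        simp only [hi, if_false]
        apply Finset.sum_eq_zero
        intro a _
        have : (a : Fin n) ≠ i := fun h => hi (h ▸ a.2)
        simp [this]
    · rw [Matrix.diagonal_apply_ne _ hij]
      apply Finset.sum_eq_zero
      intro a _
      by_cases hai : (a : Fin n) = i
      · have haj : (a : Fin n) ≠ j := fun h => hij (hai ▸ h)
        have hin : (∑ x : 𝒜, Matrix.diagonal (fun b : 𝒜 => w (b : Fin n)) a x
            * if (x : Fin n) = j then 1 else 0) = 0 := by
          apply Finset.sum_eq_zero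
          intro b _
          by_cases hbj : (b : Fin n) = j
          · have : a ≠ b := fun h => haj (h ▸ hbj)
            simp [hbj, Matrix.diagonal_apply_ne _ this]
          · simp [hbj]
        rw [hin, mul_zero]
      · simp [hai]
  have hmid : (Matrix.diagonal w)⁻¹ * Pᵀ
        * (P * (Matrix.diagonal w)⁻¹ * Pᵀ)⁻¹ * (P * (Matrix.diagonal w)⁻¹)
      = Matrix.diagonal (fun j => if j ∈ 𝒜 then (w j)⁻¹ else 0) := by
    rw [h2, hWinv]
    have : Matrix.diagonal (fun i => (w i)⁻¹) * Pᵀ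
          * Matrix.diagonal (fun a : 𝒜 => w (a : Fin n)) * (P * Matrix.diagonal (fun i => (w i)⁻¹))
        = Matrix.diagonal (fun i => (w i)⁻¹)
          * (Pᵀ * Matrix.diagonal (fun a : 𝒜 => w (a : Fin n)) * P)
          * Matrix.diagonal (fun i => (w i)⁻¹) := by
      simp only [Matrix.mul_assoc]
    rw [this, h3, Matrix.diagonal_mul_diagonal, Matrix.diagonal_mul_diagonal]
    refine congrArg Matrix.diagonal (funext fun i => ?_)
    by_cases hi : i ∈ 𝒜
    · simp [hi, ← mul_assoc, inv_mul_cancel₀ (hw i), mul_inv_cancel₀ (hw i)]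
    · simp [hi]
  have hsub : (Matrix.diagonal w)⁻¹
        - Matrix.diagonal (fun j => if j ∈ 𝒜 then (w j)⁻¹ else 0)
      = PiI * (Matrix.diagonal w)⁻¹ * PiI := by
    rw [hWinv, hPiI, Matrix.diagonal_mul_diagonal, Matrix.diagonal_mul_diagonal,
      Matrix.diagonal_sub]
    refine congrArg Matrix.diagonal (funext fun j => ?_)
    by_cases hj : j ∈ 𝒜 <;> simp [hj]
  have hY : Nᵀ * (Matrix.diagonal w)⁻¹ * Pᵀ * (P * (Matrix.diagonal w)⁻¹ * Pᵀ)⁻¹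
        * (P * (Matrix.diagonal w)⁻¹ * N)
      = Nᵀ * ((Matrix.diagonal w)⁻¹ * Pᵀ * (P * (Matrix.diagonal w)⁻¹ * Pᵀ)⁻¹
        * (P * (Matrix.diagonal w)⁻¹)) * N := by
    simp only [Matrix.mul_assoc]
  have hZ : Nᵀ * PiI * (Matrix.diagonal w)⁻¹ * PiI * N
      = Nᵀ * (PiI * (Matrix.diagonal w)⁻¹ * PiI) * N := by
    simp only [Matrix.mul_assoc]
  rw [hY, hZ, hmid, ← hsub, Matrix.mul_sub, Matrix.sub_mul, Matrix.mul_assoc]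
  rw [smul_sub, add_sub_assoc]
end

section
/- Let A₁, …, A_N be symmetric real n×n matrices and for q ∈ ℝᴺ set A(q) = Σ_{i=1}^{N} qᵢ Aᵢ. Let S ⊆ ℝᴺ be a convex set such that A(q) is positive definite for every q ∈ S, and fix f, v ∈ ℝⁿ. Define U(q) = A(q)⁻¹ f and J(q) = (1/2) (U(q) − v)ᵀ A(q) (U(q) − v) for q ∈ S. Then J is convex on S: for all q, q' ∈ S and t ∈ [0, 1], J(t q + (1 − t) q') ≤ t J(q) + (1 − t) J(q'). -/
open Matrix

/-- The stiffness matrix `A(q) = ∑ i, qᵢ • Aᵢ` depending linearly on `q`. -/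
def stiff {n N : ℕ} (A : Fin N → Matrix (Fin n) (Fin n) ℝ) (q : Fin N → ℝ) :
    Matrix (Fin n) (Fin n) ℝ :=
  ∑ i, q i • A i

/-- The discrete data-fidelity functional
`J(q) = (1/2) (U(q) - v)ᵀ A(q) (U(q) - v)` with `U(q) = A(q)⁻¹ f`. -/
noncomputable def fidelity {n N : ℕ} (A : Fin N → Matrix (Fin n) (Fin n) ℝ)
    (f v : Fin n → ℝ) (q : Fin N → ℝ) : ℝ :=
  (1/2 : ℝ) * (((stiff A q)⁻¹.mulVec f - v) ⬝ᵥ (stiff A q).mulVec ((stiff A q)⁻¹.mulVec f - v))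

lemma stiff_symm {n N : ℕ} (A : Fin N → Matrix (Fin n) (Fin n) ℝ)
    (hsymm : ∀ i, (A i).IsSymm) (q : Fin N → ℝ) : (stiff A q).IsSymm := by
  unfold stiff
  unfold Matrix.IsSymm
  rw [Matrix.transpose_sum]
  refine Finset.sum_congr rfl fun i _ => ?_
  rw [Matrix.transpose_smul, (hsymm i).eq]

lemma stiff_comb {n N : ℕ} (A : Fin N → Matrix (Fin n) (Fin n) ℝ)
    (q q' : Fin N → ℝ) (t s : ℝ) :
    stiff A (t • q + s • q') = t • stiff A q + s • stiff A q' := by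
  unfold stiff
  rw [Finset.smul_sum, Finset.smul_sum, ← Finset.sum_add_distrib]
  refine Finset.sum_congr rfl fun i _ => ?_
  simp [add_smul, smul_smul]

/-- `B *ᵥ (B⁻¹ *ᵥ f) = f` for positive definite `B`. -/
lemma mulVec_inv_mulVec {n : ℕ} (B : Matrix (Fin n) (Fin n) ℝ) (hB : B.PosDef)
    (f : Fin n → ℝ) : B.mulVec (B⁻¹.mulVec f) = f := by
  rw [Matrix.mulVec_mulVec, Matrix.mul_nonsing_inv B hB.det_pos.ne'.isUnit,
    Matrix.one_mulVec]

/-- The variational inequality `2 fᵀu − uᵀBu ≤ fᵀB⁻¹f` for `B` symmetric positive definite. -/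
lemma key_ineq {n : ℕ} (B : Matrix (Fin n) (Fin n) ℝ) (hB : B.PosDef) (hBs : B.IsSymm)
    (f u : Fin n → ℝ) :
    2 * (f ⬝ᵥ u) - u ⬝ᵥ B.mulVec u ≤ f ⬝ᵥ B⁻¹.mulVec f := by
  set w : Fin n → ℝ := u - B⁻¹.mulVec f with hw
  have h0 : 0 ≤ w ⬝ᵥ B.mulVec w := by
    have := hB.posSemidef.dotProduct_mulVec_nonneg w
    simpa using this
  have hBf : B.mulVec (B⁻¹.mulVec f) = f := mulVec_inv_mulVec B hB f
  have hdp : (B⁻¹.mulVec f) ⬝ᵥ B.mulVec u = f ⬝ᵥ u := by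
    rw [Matrix.dotProduct_mulVec, ← Matrix.mulVec_transpose, hBs.eq, hBf]
  have hexp : w ⬝ᵥ B.mulVec w
      = u ⬝ᵥ B.mulVec u - 2 * (f ⬝ᵥ u) + f ⬝ᵥ B⁻¹.mulVec f := by
    rw [hw, Matrix.mulVec_sub, hBf, sub_dotProduct, dotProduct_sub,
      dotProduct_sub, hdp, dotProduct_comm u f,
      dotProduct_comm (B⁻¹.mulVec f) f]
    ring
  linarith [hexp ▸ h0]

/-- Expansion of the fidelity functional. -/
lemma fid_eq {n N : ℕ} (A : Fin N → Matrix (Fin n) (Fin n) ℝ)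
    (hsymm : ∀ i, (A i).IsSymm) (q : Fin N → ℝ) (hq : (stiff A q).PosDef)
    (f v : Fin n → ℝ) :
    fidelity A f v q = (1/2 : ℝ) * (f ⬝ᵥ (stiff A q)⁻¹.mulVec f)
      - f ⬝ᵥ v + (1/2 : ℝ) * (v ⬝ᵥ (stiff A q).mulVec v) := by
  set B := stiff A q with hB
  set U : Fin n → ℝ := B⁻¹.mulVec f with hU
  have hBU : B.mulVec U = f := mulVec_inv_mulVec B hq f
  have hBs : B.IsSymm := stiff_symm A hsymm q
  have hUBv : U ⬝ᵥ B.mulVec v = f ⬝ᵥ v := by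
    rw [Matrix.dotProduct_mulVec, ← Matrix.mulVec_transpose, hBs.eq, hBU]
  unfold fidelity
  rw [← hB, ← hU, Matrix.mulVec_sub, hBU, sub_dotProduct, dotProduct_sub,
    dotProduct_sub, hUBv, dotProduct_comm U f,
    dotProduct_comm v f]
  ring

/-- Convexity of the data-fidelity functional `J(q) = (1/2)(U(q)-v)ᵀ A(q) (U(q)-v)` on a
convex set `S` where `A(q)` is positive definite, for symmetric matrices `A₁, …, A_N`. -/
theorem stmt_11 (n N : ℕ) (A : Fin N → Matrix (Fin n) (Fin n) ℝ)
    (hsymm : ∀ i, (A i).IsSymm)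
    (S : Set (Fin N → ℝ)) (hS : Convex ℝ S)
    (hpos : ∀ q ∈ S, (stiff A q).PosDef)
    (f v : Fin n → ℝ) :
    ∀ q ∈ S, ∀ q' ∈ S, ∀ t ∈ Set.Icc (0 : ℝ) 1,
      fidelity A f v (t • q + (1 - t) • q')
        ≤ t * fidelity A f v q + (1 - t) * fidelity A f v q' := by
  intro q hq q' hq' t ht
  obtain ⟨ht0, ht1⟩ := ht
  have hs0 : (0 : ℝ) ≤ 1 - t := by linarith
  have hmem : t • q + (1 - t) • q' ∈ S := hS hq hq' ht0 hs0 (by ring)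
  have hM : (stiff A (t • q + (1 - t) • q')).PosDef := hpos _ hmem
  have hBq : (stiff A q).PosDef := hpos _ hq
  have hBq' : (stiff A q').PosDef := hpos _ hq'
  set M := stiff A (t • q + (1 - t) • q') with hMdef
  set B := stiff A q with hBdef
  set B' := stiff A q' with hB'def
  have hcomb : M = t • B + (1 - t) • B' := stiff_comb A q q' t (1 - t)
  set u : Fin n → ℝ := M⁻¹.mulVec f with hu
  have hMu : M.mulVec u = f := mulVec_inv_mulVec M hM f
  -- f ⬝ᵥ M⁻¹ f  =  2 f⬝u - u⬝Mu, and u⬝Mu splits as convex combination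
  have hfu : f ⬝ᵥ M⁻¹.mulVec f = f ⬝ᵥ u := rfl
  have huMu : u ⬝ᵥ M.mulVec u = f ⬝ᵥ u := by
    rw [hMu, dotProduct_comm]
  have hsplit : u ⬝ᵥ M.mulVec u
      = t * (u ⬝ᵥ B.mulVec u) + (1 - t) * (u ⬝ᵥ B'.mulVec u) := by
    rw [hcomb, Matrix.add_mulVec, Matrix.smul_mulVec, Matrix.smul_mulVec,
      dotProduct_add, dotProduct_smul, dotProduct_smul]
    simp [smul_eq_mul]
  have h1 := key_ineq B hBq (stiff_symm A hsymm q) f u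
  have h2 := key_ineq B' hBq' (stiff_symm A hsymm q') f u
  have h1' := mul_le_mul_of_nonneg_left h1 ht0
  have h2' := mul_le_mul_of_nonneg_left h2 hs0
  have hconv : f ⬝ᵥ M⁻¹.mulVec f
      ≤ t * (f ⬝ᵥ B⁻¹.mulVec f) + (1 - t) * (f ⬝ᵥ B'⁻¹.mulVec f) := by
    have : f ⬝ᵥ M⁻¹.mulVec f
        = t * (2 * (f ⬝ᵥ u) - u ⬝ᵥ B.mulVec u)
          + (1 - t) * (2 * (f ⬝ᵥ u) - u ⬝ᵥ B'.mulVec u) := by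
      rw [hfu]
      have := huMu
      rw [hsplit] at this
      linarith
    linarith [this]
  have hlin : v ⬝ᵥ M.mulVec v
      = t * (v ⬝ᵥ B.mulVec v) + (1 - t) * (v ⬝ᵥ B'.mulVec v) := by
    rw [hcomb, Matrix.add_mulVec, Matrix.smul_mulVec, Matrix.smul_mulVec,
      dotProduct_add, dotProduct_smul, dotProduct_smul]
    simp [smul_eq_mul]
  rw [fid_eq A hsymm _ hM, fid_eq A hsymm _ hBq, fid_eq A hsymm _ hBq']
  rw [← hMdef, ← hBdef, ← hB'def]
  linarith [hconv, hlin]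
end
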